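/- The weight-m operator Z̄ = Zop {0, 1, …, m−1} (the product of Z over one representative of each antipodal pair) is a logical Z operator of the X–I code Ξ(2m): it commutes with every Z-generator and every X-generator of Ξ(2m), and it satisfies Z̄ |0̄⟩ = |0̄⟩ and Z̄ |1̄⟩ = −|1̄⟩. -/
import Mathlib


open scoped BigOperators

/-- Bit strings on `2m` qubits. -/
abbrev Bits (m : ℕ) := Fin (2*m) → ZMod 2

/-- The `2m`-qubit Hilbert space, as functions from computational basis labels to `ℂ`. -/
abbrev QState (m : ℕ) := Bits m → ℂ

/-- Indicator bit string of a finite set of qubits. -/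
def indSet (m : ℕ) (S : Finset (Fin (2*m))) : Bits m := fun i => if i ∈ S then 1 else 0

/-- The Pauli-X operator on the set `S`: sends `|x⟩` to `|x + 1_S⟩`. -/
def Xop (m : ℕ) (S : Finset (Fin (2*m))) : QState m →ₗ[ℂ] QState m where
  toFun v := fun x => v (x + indSet m S)
  map_add' _ _ := rfl
  map_smul' _ _ := rfl

/-- The Pauli-Z operator on the set `S`: sends `|x⟩` to `(-1)^{∑_{i∈S} x i} |x⟩`. -/
def Zop (m : ℕ) (S : Finset (Fin (2*m))) : QState m →ₗ[ℂ] QState m where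
  toFun v := fun x => ((-1 : ℂ) ^ (∑ i ∈ S, (x i).val)) * v x
  map_add' u v := by funext x; simp [mul_add]
  map_smul' c v := by funext x; simp; ring

/-- The antipodal involution `τ i = i + m (mod 2m)`. -/
def tau (m : ℕ) (i : Fin (2*m)) : Fin (2*m) :=
  ⟨(i.val + m) % (2*m), Nat.mod_lt _ (by have := i.isLt; omega)⟩

/-- The computational basis state `|x⟩`. -/
def ket (m : ℕ) (x : Bits m) : QState m := fun y => if y = x then 1 else 0

/-- The pair-equal bit string determined by `b : Fin m → ZMod 2`. -/
def xb (m : ℕ) (b : Fin m → ZMod 2) : Bits m :=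
  fun i => b ⟨i.val % m, Nat.mod_lt _ (by have := i.isLt; omega)⟩

/-- The logical codeword `|0̄⟩` of the X–I code `Ξ(2m)`. -/
noncomputable def ket0 (m : ℕ) : QState m :=
  ((Real.sqrt (2 ^ (m-1)) : ℂ))⁻¹ •
    ∑ b ∈ Finset.univ.filter (fun b : Fin m → ZMod 2 => ∑ i, b i = 0), ket m (xb m b)

/-- The logical codeword `|1̄⟩` of the X–I code `Ξ(2m)`. -/
noncomputable def ket1 (m : ℕ) : QState m :=
  ((Real.sqrt (2 ^ (m-1)) : ℂ))⁻¹ •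
    ∑ b ∈ Finset.univ.filter (fun b : Fin m → ZMod 2 => ∑ i, b i = 1), ket m (xb m b)

/-- The set `{0, 1, …, m−1}` of qubits, one representative from each antipodal pair. -/
def lowerHalf (m : ℕ) : Finset (Fin (2*m)) :=
  Finset.univ.filter (fun i : Fin (2*m) => i.val < m)

/- auxiliary lemmas -/

lemma neg_one_pow_eq (n : ℕ) : ((-1:ℂ))^n = if (n : ZMod 2) = 0 then 1 else -1 := by
  have h2 : ((n : ZMod 2) = 0) ↔ Even n := by
    rw [ZMod.natCast_eq_zero_iff]; exact even_iff_two_dvd.symm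
  rcases Nat.even_or_odd n with h | h
  · rw [h.neg_one_pow, if_pos (h2.mpr h)]
  · rw [h.neg_one_pow, if_neg (fun hc => (Nat.not_odd_iff_even.mpr (h2.mp hc)) h)]

lemma neg_one_pow_sum {ι : Type*} (s : Finset ι) (f : ι → ZMod 2) :
    ((-1:ℂ))^(∑ i ∈ s, (f i).val) = if (∑ i ∈ s, f i) = 0 then 1 else -1 := by
  rw [neg_one_pow_eq]
  have : ((∑ i ∈ s, (f i).val : ℕ) : ZMod 2) = ∑ i ∈ s, f i := by
    rw [Nat.cast_sum]
    exact Finset.sum_congr rfl (fun i _ => ZMod.natCast_rightInverse (f i))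
  rw [this]

lemma tau_val (m : ℕ) (j : Fin (2*m)) :
    (tau m j).val = if j.val < m then j.val + m else j.val - m := by
  have hj := j.isLt
  show (j.val + m) % (2*m) = _
  split
  · exact Nat.mod_eq_of_lt (by omega)
  · rw [Nat.mod_eq_sub_mod (by omega)]
    have : j.val + m - 2*m = j.val - m := by omega
    rw [this, Nat.mod_eq_of_lt (by omega)]

lemma tau_tau (m : ℕ) (j : Fin (2*m)) : tau m (tau m j) = j := by
  have hj := j.isLt
  apply Fin.ext
  rw [tau_val, tau_val]
  split <;> split <;> omega

lemma mem_lowerHalf {m : ℕ} {i : Fin (2*m)} : i ∈ lowerHalf m ↔ i.val < m := by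
  simp [lowerHalf]

lemma tau_mem_lowerHalf {m : ℕ} (j : Fin (2*m)) :
    tau m j ∈ lowerHalf m ↔ j ∉ lowerHalf m := by
  have hj := j.isLt
  rw [mem_lowerHalf, mem_lowerHalf, tau_val]
  split <;> omega

lemma tau_ne (m : ℕ) (j : Fin (2*m)) : tau m j ≠ j := by
  have hj := j.isLt
  intro h
  have := congrArg Fin.val h
  rw [tau_val] at this
  split at this <;> omega

/-- Zop applied to a basis ket. -/
lemma Zop_ket (m : ℕ) (S : Finset (Fin (2*m))) (x : Bits m) :
    Zop m S (ket m x) = ((-1:ℂ))^(∑ i ∈ S, (x i).val) • ket m x := by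
  funext y
  show ((-1 : ℂ) ^ (∑ i ∈ S, (y i).val)) * (if y = x then 1 else 0) = _
  by_cases h : y = x
  · subst h; simp [ket, Pi.smul_apply]
  · simp [ket, h, Pi.smul_apply]

lemma sum_lower_xb (m : ℕ) (b : Fin m → ZMod 2) :
    ∑ i ∈ lowerHalf m, xb m b i = ∑ i : Fin m, b i := by
  refine Finset.sum_bij'
      (fun (i : Fin (2*m)) (_ : i ∈ lowerHalf m) =>
        (⟨i.val % m, Nat.mod_lt _ (by have := i.isLt; omega)⟩ : Fin m))
      (fun (i : Fin m) (_ : i ∈ Finset.univ) => (⟨i.val, by have := i.isLt; omega⟩ : Fin (2*m)))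
      (fun i _ => Finset.mem_univ _)
      (fun i _ => mem_lowerHalf.mpr i.isLt) ?_ ?_ ?_
  · intro i hi
    have him : i.val < m := mem_lowerHalf.mp hi
    apply Fin.ext
    show i.val % m = i.val
    exact Nat.mod_eq_of_lt him
  · intro i _
    apply Fin.ext
    show i.val % m = i.val
    exact Nat.mod_eq_of_lt i.isLt
  · intro i hi; rfl

lemma sum_indSet_pairs (m : ℕ) (j k : Fin (2*m))
    (hjk : ({j, tau m j} : Finset (Fin (2*m))) ≠ {k, tau m k}) :
    ∑ i ∈ lowerHalf m, indSet m {j, tau m j, k, tau m k} i = 0 := by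
  -- distinctness
  have hjj : j ≠ tau m j := (tau_ne m j).symm
  have hkk : k ≠ tau m k := (tau_ne m k).symm
  have hjk1 : j ≠ k := fun h => hjk (by rw [h])
  have hjk2 : j ≠ tau m k := by
    intro h
    apply hjk
    rw [h, tau_tau, Finset.pair_comm]
  have hjk3 : tau m j ≠ k := by
    intro h
    apply hjk
    have : j = tau m k := by rw [← h, tau_tau]
    rw [this, tau_tau, Finset.pair_comm]
  have hjk4 : tau m j ≠ tau m k := by
    intro h
    exact hjk1 (by rw [← tau_tau m j, h, tau_tau])
  have hswap : ∑ i ∈ lowerHalf m, indSet m {j, tau m j, k, tau m k} i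
      = ∑ i ∈ ({j, tau m j, k, tau m k} : Finset (Fin (2*m))),
          (if i ∈ lowerHalf m then (1 : ZMod 2) else 0) := by
    show (∑ i ∈ lowerHalf m, if i ∈ ({j, tau m j, k, tau m k} : Finset (Fin (2*m))) then (1:ZMod 2) else 0) = _
    rw [Finset.sum_ite_mem, Finset.sum_ite_mem, Finset.inter_comm]
  rw [hswap]
  have h1 : j ∉ ({tau m j, k, tau m k} : Finset (Fin (2*m))) := by
    simp [hjj, hjk1, hjk2]
  have h2 : tau m j ∉ ({k, tau m k} : Finset (Fin (2*m))) := by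
    simp [hjk3, hjk4]
  have h3 : k ∉ ({tau m k} : Finset (Fin (2*m))) := by simp [hkk]
  rw [Finset.sum_insert h1, Finset.sum_insert h2, Finset.sum_insert h3, Finset.sum_singleton]
  have hj' := tau_mem_lowerHalf j
  have hk' := tau_mem_lowerHalf k
  by_cases hjL : j ∈ lowerHalf m <;> by_cases hkL : k ∈ lowerHalf m <;>
    simp [hjL, hkL, hj'.mpr, hk'.mpr, hj', hk'] <;> decide


/-- The weight-`m` operator `Z̄ = Zop {0, …, m−1}` is a logical Z operator of the X–I
code `Ξ(2m)`: it commutes with every Z-generator and every X-generator, fixes `|0̄⟩`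
and negates `|1̄⟩`. -/
theorem XI_logical_Z (m : ℕ) (hm : 2 ≤ m) :
    (∀ j : Fin (2*m),
        (Zop m (lowerHalf m)).comp (Zop m {j, tau m j}) =
          (Zop m {j, tau m j}).comp (Zop m (lowerHalf m))) ∧
    (∀ j k : Fin (2*m), ({j, tau m j} : Finset (Fin (2*m))) ≠ {k, tau m k} →
        (Zop m (lowerHalf m)).comp (Xop m {j, tau m j, k, tau m k}) =
          (Xop m {j, tau m j, k, tau m k}).comp (Zop m (lowerHalf m))) ∧
    Zop m (lowerHalf m) (ket0 m) = ket0 m ∧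
    Zop m (lowerHalf m) (ket1 m) = -(ket1 m) := by
  refine ⟨?_, ?_, ?_, ?_⟩
  · intro j
    apply LinearMap.ext; intro v; funext x
    simp only [LinearMap.comp_apply, Zop, LinearMap.coe_mk, AddHom.coe_mk]
    ring
  · intro j k hjk
    apply LinearMap.ext; intro v; funext x
    simp only [LinearMap.comp_apply, Zop, Xop, LinearMap.coe_mk, AddHom.coe_mk]
    have hsum : ∑ i ∈ lowerHalf m, ((x + indSet m {j, tau m j, k, tau m k}) i)
        = ∑ i ∈ lowerHalf m, x i := by
      have : ∀ i, (x + indSet m {j, tau m j, k, tau m k}) i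
          = x i + indSet m {j, tau m j, k, tau m k} i := fun _ => rfl
      simp_rw [this, Finset.sum_add_distrib, sum_indSet_pairs m j k hjk, add_zero]
    rw [neg_one_pow_sum _ (fun i => x i),
      neg_one_pow_sum _ (fun i => (x + indSet m {j, tau m j, k, tau m k}) i), hsum]
  · rw [ket0, map_smul, map_sum]
    congr 1
    apply Finset.sum_congr rfl
    intro b hb
    simp only [Finset.mem_filter] at hb
    rw [Zop_ket, neg_one_pow_sum _ (fun i => xb m b i), sum_lower_xb, if_pos hb.2, one_smul]
  · rw [ket1, map_smul, map_sum, ← smul_neg]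
    congr 1
    rw [← Finset.sum_neg_distrib]
    apply Finset.sum_congr rfl
    intro b hb
    simp only [Finset.mem_filter] at hb
    rw [Zop_ket, neg_one_pow_sum _ (fun i => xb m b i), sum_lower_xb, hb.2,
      if_neg one_ne_zero, neg_one_smul]
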